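/- Let F_1, …, F_h be (commutative) fields of characteristic zero, fix positive integers n_1, …, n_h, and let M be an invertible element of the product ring R = M_{n_1}(F_1) × ⋯ × M_{n_h}(F_h). (i) If there exist integers 0 < p < q such that M^p is conjugate to M^q in R, then M is quasi-unipotent. (ii) If M is conjugate to M^p in R for every integer p ≥ 1, then M is unipotent. -/

import Mathlib

/-!
STATEMENT 15: Let `F_1, …, F_h` be fields of characteristic zero, `n_i > 0`, and `M` an
invertible element of `R = M_{n_1}(F_1) × ⋯ × M_{n_h}(F_h)`.
(i)  If `M^p` is conjugate to `M^q` in `R` for some `0 < p < q`, then `M` is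
     quasi-unipotent (`M^s − 1` is nilpotent for some `s ≥ 1`).
(ii) If `M` is conjugate to `M^p` in `R` for every `p ≥ 1`, then `M` is unipotent
     (`M − 1` is nilpotent).
-/

open Polynomial

/-- A square matrix over an algebraically closed field whose spectrum is contained in `{0}`
is nilpotent. -/
lemma matrix_isNilpotent_of_spectrum_subset_zero {K : Type*} [Field K] [IsAlgClosed K]
    {m : ℕ} (C : Matrix (Fin m) (Fin m) K) (hs : spectrum K C ⊆ {0}) :
    IsNilpotent C := by
  classical
  set e := Matrix.toLinAlgEquiv (Pi.basisFun K (Fin m)) with he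
  set f := e C with hf
  have hspec : spectrum K f = spectrum K C := AlgEquiv.spectrum_eq e C
  have hint : IsIntegral K f := Algebra.IsIntegral.isIntegral f
  have hmo : (minpoly K f).Monic := minpoly.monic hint
  have hsplit : (minpoly K f).Splits := IsAlgClosed.splits _
  have hroots : ∀ μ ∈ (minpoly K f).roots, μ = (0 : K) := by
    intro μ hμ
    have h1 : (minpoly K f).IsRoot μ := isRoot_of_mem_roots hμ
    have h2 : Module.End.HasEigenvalue f μ := Module.End.hasEigenvalue_of_isRoot h1
    have h3 : μ ∈ spectrum K f := Module.End.hasEigenvalue_iff_mem_spectrum.mp h2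
    exact hs (hspec ▸ h3)
  have hXpow : minpoly K f = X ^ Multiset.card (minpoly K f).roots := by
    have h1 := hsplit.eq_prod_roots_of_monic hmo
    have h2 : (minpoly K f).roots =
        Multiset.replicate (Multiset.card (minpoly K f).roots) 0 :=
      Multiset.eq_replicate_card.mpr hroots
    rw [h1, h2, Multiset.map_replicate, Multiset.prod_replicate]
    simp
  have hfz : f ^ Multiset.card (minpoly K f).roots = 0 := by
    have h0 := minpoly.aeval K f
    rw [hXpow] at h0
    rwa [map_pow, aeval_X] at h0
  refine ⟨Multiset.card (minpoly K f).roots, ?_⟩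
  apply e.injective
  rw [map_pow, ← hf, hfz, map_zero]

/-- If `x - 1` is nilpotent then so is `x ^ t - 1`. -/
lemma isNilpotent_pow_sub_one {R : Type*} [Ring R] {x : R} (hx : IsNilpotent (x - 1)) (t : ℕ) :
    IsNilpotent (x ^ t - 1) := by
  rw [← geom_sum_mul x t]
  refine Commute.isNilpotent_mul_left ?_ hx
  refine Commute.sub_right ?_ (Commute.one_right _)
  exact Commute.sum_left _ _ _ fun i _ => (Commute.refl x).pow_left i

/-- Key component lemma: if `A` is an invertible matrix over a field and `A ^ p` is conjugate
to `A ^ q` with `0 < p < q`, then `A` is quasi-unipotent. -/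
lemma component_quasi_unipotent {F : Type*} [Field F] {m : ℕ}
    (A : Matrix (Fin m) (Fin m) F) (hA : IsUnit A) {p q : ℕ} (hp : 0 < p) (hpq : p < q)
    (V : (Matrix (Fin m) (Fin m) F)ˣ)
    (hconj : A ^ p = (V : Matrix (Fin m) (Fin m) F) * A ^ q *
      ((V⁻¹ : (Matrix (Fin m) (Fin m) F)ˣ) : Matrix (Fin m) (Fin m) F)) :
    ∃ s : ℕ, 1 ≤ s ∧ IsNilpotent (A ^ s - 1) := by
  classical
  have hq : 0 < q := hp.trans hpq
  set K := AlgebraicClosure F with hK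
  set φ : F →+* K := algebraMap F K with hφ
  set Φ : Matrix (Fin m) (Fin m) F →+* Matrix (Fin m) (Fin m) K := φ.mapMatrix with hΦ
  have hΦinj : Function.Injective Φ := by
    intro X Y hXY
    ext i j
    exact φ.injective (congrFun (congrFun hXY i) j)
  set B := Φ A with hB
  have hBu : IsUnit B := hA.map Φ
  set W : (Matrix (Fin m) (Fin m) K)ˣ := Units.map Φ.toMonoidHom V with hW
  have hWconj : B ^ p = (W : Matrix (Fin m) (Fin m) K) * B ^ q *
      ((W⁻¹ : (Matrix (Fin m) (Fin m) K)ˣ) : Matrix (Fin m) (Fin m) K) := by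
    have h0 := congrArg Φ hconj
    simpa only [map_mul, map_pow, hW, Units.coe_map, Units.coe_map_inv,
      RingHom.toMonoidHom_eq_coe, MonoidHom.coe_coe, hB] using h0
  have h0B : (0 : K) ∉ spectrum K B := (spectrum.zero_notMem_iff K).mpr hBu
  have himg : (· ^ q) '' spectrum K B = (· ^ p) '' spectrum K B := by
    rw [← spectrum.map_pow_of_pos B hq, ← spectrum.map_pow_of_pos B hp, hWconj,
      spectrum.units_conjugate]
  -- every spectral value is a root of unity
  have hunit : ∀ x : K, x ∈ spectrum K B → ∃ k : ℕ, 1 ≤ k ∧ x ^ k = 1 := by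
    have hstep : ∀ x : spectrum K B, ∃ y : spectrum K B, (y : K) ^ p = (x : K) ^ q := by
      intro x
      have hx : (x : K) ^ q ∈ (· ^ p) '' spectrum K B := by
        rw [← himg]; exact ⟨x, x.2, rfl⟩
      obtain ⟨y, hy, hyx⟩ := hx
      exact ⟨⟨y, hy⟩, hyx⟩
    choose g hg using hstep
    have hiter : ∀ (k : ℕ) (x : spectrum K B),
        ((g^[k] x : spectrum K B) : K) ^ (p ^ k) = (x : K) ^ (q ^ k) := by
      intro k
      induction k with
      | zero => intro x; simp
      | succ k ih =>
        intro x
        calc ((g^[k+1] x : spectrum K B) : K) ^ (p ^ (k+1))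
            = (((g (g^[k] x) : spectrum K B) : K) ^ p) ^ (p ^ k) := by
              rw [Function.iterate_succ_apply', pow_succ', pow_mul]
          _ = (((g^[k] x : spectrum K B) : K) ^ (p ^ k)) ^ q := by
              rw [hg, ← pow_mul, mul_comm, pow_mul]
          _ = ((x : K) ^ (q ^ k)) ^ q := by rw [ih]
          _ = (x : K) ^ (q ^ (k+1)) := by rw [← pow_mul, ← pow_succ]
    -- the key consequence of a coincidence of iterates
    have hkey : ∀ (x : spectrum K B) (a b : ℕ), a < b → g^[a] x = g^[b] x →
        ∃ k : ℕ, 1 ≤ k ∧ (x : K) ^ k = 1 := by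
      intro x a b hab heqab
      set c := b - a with hc
      have hc1 : 0 < c := Nat.sub_pos_of_lt hab
      set μ := g^[a] x with hμ
      have hcab : c + a = b := by omega
      have hfix : g^[c] μ = μ := by
        calc g^[c] μ = g^[c + a] x := by rw [hμ, Function.iterate_add_apply]
          _ = g^[b] x := by rw [hcab]
          _ = μ := heqab.symm
      have h1 : (μ : K) ^ (p ^ c) = (μ : K) ^ (q ^ c) := by
        have h2 := hiter c μ
        rwa [hfix] at h2
      have hμ0 : (μ : K) ≠ 0 := fun hz => h0B (hz ▸ μ.2)
      have hlt : p ^ c < q ^ c := Nat.pow_lt_pow_left hpq hc1.ne'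
      set t := q ^ c - p ^ c with ht
      have ht1 : 1 ≤ t := Nat.sub_pos_of_lt hlt
      have hμ1 : (μ : K) ^ t = 1 := by
        have h2 : (μ : K) ^ (p ^ c) * (μ : K) ^ t = (μ : K) ^ (p ^ c) * 1 := by
          rw [mul_one, ← pow_add, Nat.add_sub_cancel' hlt.le]
          exact h1.symm
        exact mul_left_cancel₀ (pow_ne_zero _ hμ0) h2
      refine ⟨q ^ a * t, ?_, ?_⟩
      · have : 0 < q ^ a := Nat.pow_pos hq
        exact Nat.one_le_iff_ne_zero.mpr (by positivity)
      · have h3 : (μ : K) ^ (p ^ a) = (x : K) ^ (q ^ a) := hiter a x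
        calc (x : K) ^ (q ^ a * t) = ((x : K) ^ (q ^ a)) ^ t := by rw [pow_mul]
          _ = ((μ : K) ^ (p ^ a)) ^ t := by rw [h3]
          _ = ((μ : K) ^ t) ^ (p ^ a) := by rw [← pow_mul, mul_comm, pow_mul]
          _ = 1 := by rw [hμ1, one_pow]
    intro x hx
    obtain ⟨a, b, hab, heq⟩ :=
      Finite.exists_ne_map_eq_of_infinite (fun k : ℕ => g^[k] (⟨x, hx⟩ : spectrum K B))
    rcases hab.lt_or_gt with hlt | hlt
    · exact hkey ⟨x, hx⟩ a b hlt heq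
    · exact hkey ⟨x, hx⟩ b a hlt heq.symm
  -- choose a uniform exponent
  have hEfin : (spectrum K B).Finite := Matrix.finite_spectrum B
  haveI : Fintype (spectrum K B) := hEfin.fintype
  have hunit' : ∀ x : spectrum K B, ∃ k : ℕ, 1 ≤ k ∧ (x : K) ^ k = 1 :=
    fun x => hunit x x.2
  choose k hk1 hk2 using hunit'
  refine ⟨∏ x : spectrum K B, k x, Finset.one_le_prod' fun x _ => hk1 x, ?_⟩
  set s := ∏ x : spectrum K B, k x with hs
  have hs1 : 0 < s := Finset.one_le_prod' fun x _ => hk1 x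
  have hsall : ∀ x ∈ spectrum K B, x ^ s = 1 := by
    intro x hx
    obtain ⟨d, hd⟩ := Finset.dvd_prod_of_mem k (Finset.mem_univ (⟨x, hx⟩ : spectrum K B))
    rw [hs, hd, pow_mul, hk2 ⟨x, hx⟩, one_pow]
  have hspec' : spectrum K (B ^ s - 1) ⊆ {0} := by
    have hdeg : 0 < (X ^ s - C (1 : K)).degree := by
      rw [Polynomial.degree_X_pow_sub_C hs1 (1 : K)]
      exact_mod_cast hs1
    have haev : aeval B (X ^ s - C (1 : K)) = B ^ s - 1 := by
      simp [map_sub, aeval_X_pow]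
    have hmap := spectrum.map_polynomial_aeval_of_degree_pos B (X ^ s - C (1 : K)) hdeg
    rw [haev] at hmap
    rw [hmap]
    rintro _ ⟨z, hz, rfl⟩
    simp [hsall z hz]
  have hnilB : IsNilpotent (B ^ s - 1) :=
    matrix_isNilpotent_of_spectrum_subset_zero _ hspec'
  obtain ⟨r, hr⟩ := hnilB
  refine ⟨r, hΦinj ?_⟩
  rw [map_pow, map_sub, map_pow, map_one, map_zero, ← hB, hr]

theorem quasi_unipotent_of_conjugate_powers
    {h : ℕ} (F : Fin h → Type*) [∀ i, Field (F i)] [∀ i, CharZero (F i)]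
    (n : Fin h → ℕ) (hn : ∀ i, 0 < n i)
    (M : ∀ i, Matrix (Fin (n i)) (Fin (n i)) (F i))
    (hM : IsUnit M) :
    -- (i)
    ((∃ p q : ℕ, 0 < p ∧ p < q ∧
        ∃ U : (∀ i, Matrix (Fin (n i)) (Fin (n i)) (F i))ˣ,
          M ^ p = (U : ∀ i, Matrix (Fin (n i)) (Fin (n i)) (F i)) * M ^ q * (↑U⁻¹)) →
      ∃ s : ℕ, 1 ≤ s ∧ IsNilpotent (M ^ s - 1)) ∧
    -- (ii)
    ((∀ p : ℕ, 1 ≤ p →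
        ∃ U : (∀ i, Matrix (Fin (n i)) (Fin (n i)) (F i))ˣ,
          M = (U : ∀ i, Matrix (Fin (n i)) (Fin (n i)) (F i)) * M ^ p * (↑U⁻¹)) →
      IsNilpotent (M - 1)) := by
  classical
  have key : (∃ p q : ℕ, 0 < p ∧ p < q ∧
      ∃ U : (∀ i, Matrix (Fin (n i)) (Fin (n i)) (F i))ˣ,
        M ^ p = (U : ∀ i, Matrix (Fin (n i)) (Fin (n i)) (F i)) * M ^ q * (↑U⁻¹)) →
      ∃ s : ℕ, 1 ≤ s ∧ IsNilpotent (M ^ s - 1) := by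
    rintro ⟨p, q, hp, hpq, U, hU⟩
    have hcomp : ∀ i, ∃ s : ℕ, 1 ≤ s ∧ IsNilpotent ((M i) ^ s - 1) := by
      intro i
      refine component_quasi_unipotent (M i) (hM.map (Pi.evalRingHom _ i)) hp hpq
        (Units.map (Pi.evalRingHom _ i).toMonoidHom U) ?_
      have h0 := congrFun hU i
      simpa only [Pi.pow_apply, Pi.mul_apply, Units.coe_map, Units.coe_map_inv,
        RingHom.toMonoidHom_eq_coe, MonoidHom.coe_coe, Pi.evalRingHom_apply] using h0
    choose t ht using hcomp
    refine ⟨∏ i, t i, Finset.one_le_prod' fun i _ => (ht i).1, ?_⟩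
    have hnil : ∀ i, IsNilpotent ((M i) ^ (∏ j, t j) - 1) := by
      intro i
      obtain ⟨d, hd⟩ := Finset.dvd_prod_of_mem t (Finset.mem_univ i)
      rw [hd, pow_mul]
      exact isNilpotent_pow_sub_one (ht i).2 d
    choose r hr using hnil
    refine ⟨Finset.univ.sup r, ?_⟩
    funext i
    have hle : r i ≤ Finset.univ.sup r := Finset.le_sup (Finset.mem_univ i)
    have h1 : ((M ^ (∏ j, t j) - 1) ^ Finset.univ.sup r) i
        = ((M i) ^ (∏ j, t j) - 1) ^ Finset.univ.sup r := by
      simp [Pi.pow_apply, Pi.sub_apply]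
    rw [h1]
    have h2 : ((M i) ^ (∏ j, t j) - 1) ^ Finset.univ.sup r
        = ((M i) ^ (∏ j, t j) - 1) ^ (Finset.univ.sup r - r i)
          * ((M i) ^ (∏ j, t j) - 1) ^ r i := by
      rw [← pow_add, Nat.sub_add_cancel hle]
    rw [h2, hr i, mul_zero]
    rfl
  refine ⟨key, ?_⟩
  intro H
  obtain ⟨U2, hU2⟩ := H 2 (by norm_num)
  obtain ⟨s, hs1, hnil⟩ := key ⟨1, 2, one_pos, one_lt_two, U2, by simpa [pow_one] using hU2⟩
  obtain ⟨Us, hUs⟩ := H s hs1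
  obtain ⟨r, hr⟩ := hnil
  refine ⟨r, ?_⟩
  have hM1 : M - 1 = ↑Us * (M ^ s - 1) * ↑Us⁻¹ := by
    rw [mul_sub, sub_mul, mul_one, Units.mul_inv, ← hUs]
  rw [hM1, Units.conj_pow, hr, mul_zero, zero_mul]
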